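/- Let (kₙ) be a strictly increasing sequence of positive integers with ∑ₙ 1/kₙ = +∞, and let B be the backward shift on ℓ². For fixed 1 < a < b, a nonzero finitely supported vector y ∈ ℓ², and s ∈ ℕ, the set of x ∈ ℓ² such that for every λ ∈ [a,b] there exists n ∈ ℕ with ‖(λB)^{kₙ}(x) − y‖ < 1/s, is dense in ℓ². -/

import Mathlib

open scoped ENNReal

theorem singleApply (i : ℕ) (c : ℂ) (j : ℕ) :
    (lp.single (E := fun _ : ℕ => ℂ) 2 i c : ℕ → ℂ) j = if j = i then c else 0 := by
  rw [lp.single_apply]; split <;> simp_all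

theorem powApply (B : lp (fun _ : ℕ => ℂ) 2 →L[ℂ] lp (fun _ : ℕ => ℂ) 2)
    (hB : ∀ (x : lp (fun _ : ℕ => ℂ) 2) (n : ℕ), B x n = x (n + 1))
    (l : ℂ) (K : ℕ) (x : lp (fun _ : ℕ => ℂ) 2) (n : ℕ) :
    ((l • B) ^ K) x n = l ^ K * x (n + K) := by
  induction K generalizing x n with
  | zero => simp
  | succ K ih =>
      have h1 : ((l • B) ^ (K+1)) x = ((l • B) ^ K) ((l • B) x) := by
        rw [pow_succ, ContinuousLinearMap.mul_apply]
      rw [h1, ih]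
      have h2 : ((l • B) x : ℕ → ℂ) (n + K) = l * x (n + K + 1) := by
        rw [ContinuousLinearMap.smul_apply, lp.coeFn_smul, Pi.smul_apply, hB]
        simp
      rw [h2]
      have h3 : n + K + 1 = n + (K + 1) := by omega
      rw [h3]; ring

theorem shiftSingleHigh (B : lp (fun _ : ℕ => ℂ) 2 →L[ℂ] lp (fun _ : ℕ => ℂ) 2)
    (hB : ∀ (x : lp (fun _ : ℕ => ℂ) 2) (n : ℕ), B x n = x (n + 1))
    (c : ℂ) (K m : ℕ) (v : ℂ) (h : K ≤ m) :
    ((c • B) ^ K) (lp.single 2 m v) = c ^ K • lp.single 2 (m - K) v := by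
  apply lp.ext
  funext n
  rw [powApply B hB, lp.coeFn_smul, Pi.smul_apply, singleApply, singleApply]
  by_cases hn : n + K = m
  · rw [if_pos hn, if_pos (by omega)]; simp
  · rw [if_neg hn, if_neg (by omega)]; simp

theorem shiftSingleLow (B : lp (fun _ : ℕ => ℂ) 2 →L[ℂ] lp (fun _ : ℕ => ℂ) 2)
    (hB : ∀ (x : lp (fun _ : ℕ => ℂ) 2) (n : ℕ), B x n = x (n + 1))
    (c : ℂ) (K m : ℕ) (v : ℂ) (h : m < K) :
    ((c • B) ^ K) (lp.single 2 m v) = 0 := by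
  apply lp.ext
  funext n
  rw [powApply B hB, singleApply, if_neg (by omega)]
  simp

theorem sumSingleEq (y : lp (fun _ : ℕ => ℂ) 2) (hyfin : {n : ℕ | y n ≠ 0}.Finite) :
    y = ∑ t ∈ hyfin.toFinset, lp.single 2 t (y t) := by
  apply lp.ext
  funext n
  rw [lp.coeFn_sum, Finset.sum_apply]
  rw [Finset.sum_congr rfl (fun t _ => singleApply t (y t) n)]
  rw [Finset.sum_ite_eq hyfin.toFinset n (fun t => y t)]
  by_cases hn : n ∈ hyfin.toFinset
  · rw [if_pos hn]
  · rw [if_neg hn]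
    have := hn
    simp only [Set.Finite.mem_toFinset, Set.mem_setOf_eq, not_not] at this
    exact this

theorem divAux (k : ℕ → ℕ) (hk : Monotone k) (hkpos : ∀ n, 0 < k n)
    (hdiv : ¬ Summable (fun n => (1 : ℝ) / k n))
    (n₀ d : ℕ) (hd : 0 < d) (C : ℝ) :
    ∃ J, C < ∑ j ∈ Finset.range J, (1 : ℝ) / k (n₀ + j * d) := by
  have hnn : ∀ n, 0 ≤ (1:ℝ) / k n := fun n => by positivity
  have htend := (not_summable_iff_tendsto_nat_atTop_of_nonneg hnn).mp hdiv
  have hbig : ∀ᶠ N in Filter.atTop,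
      d * C + ∑ n ∈ Finset.range n₀, (1:ℝ)/ k n < ∑ n ∈ Finset.range N, (1:ℝ)/ k n := by
    exact htend.eventually_gt_atTop _
  obtain ⟨N₀, hN₀⟩ := hbig.exists
  refine ⟨N₀, ?_⟩
  have hgroup : ∀ J : ℕ, ∑ n ∈ Finset.range (n₀ + J * d), (1:ℝ)/ k n
      = (∑ n ∈ Finset.range n₀, (1:ℝ)/ k n)
        + ∑ j ∈ Finset.range J, ∑ r ∈ Finset.range d, (1:ℝ)/ k (n₀ + j * d + r) := by
    intro J
    induction J with
    | zero => simp
    | succ J ih =>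
        have : n₀ + (J+1) * d = (n₀ + J * d) + d := by ring
        rw [this, Finset.sum_range_add, ih, Finset.sum_range_succ]
        ring
  have hle : ∑ n ∈ Finset.range (n₀ + N₀ * d), (1:ℝ)/ k n
      ≤ (∑ n ∈ Finset.range n₀, (1:ℝ)/ k n)
        + ∑ j ∈ Finset.range N₀, (d : ℝ) * ((1:ℝ)/ k (n₀ + j * d)) := by
    rw [hgroup]
    gcongr with j hj
    have : ∑ r ∈ Finset.range d, (1:ℝ)/ k (n₀ + j * d + r)
        ≤ ∑ r ∈ Finset.range d, (1:ℝ)/ k (n₀ + j * d) := by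
      refine Finset.sum_le_sum fun r _ => ?_
      apply one_div_le_one_div_of_le
      · exact_mod_cast hkpos _
      · exact_mod_cast hk (Nat.le_add_right _ _)
    simpa using this
  have hN₀' : d * C + ∑ n ∈ Finset.range n₀, (1:ℝ)/ k n
      < ∑ n ∈ Finset.range (n₀ + N₀ * d), (1:ℝ)/ k n := by
    refine lt_of_lt_of_le hN₀ ?_
    refine Finset.sum_le_sum_of_subset_of_nonneg ?_ (fun i _ _ => hnn i)
    exact Finset.range_subset_range.mpr (le_trans (Nat.le_mul_of_pos_right N₀ hd) (Nat.le_add_left _ _))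
  rw [← Finset.mul_sum] at hle
  have hd' : (0:ℝ) < d := by exact_mod_cast hd
  nlinarith [hle, hN₀']

theorem kaddAux (k : ℕ → ℕ) (hk : StrictMono k) (m n : ℕ) : k m + n ≤ k (m + n) := by
  induction n with
  | zero => simp
  | succ n ih => have h2 : k (m+n) < k (m + (n+1)) := hk (by omega); omega

set_option maxHeartbeats 4000000 in
theorem stmt_10 (k : ℕ → ℕ) (hk : StrictMono k) (hkpos : ∀ n, 0 < k n)
    (hdiv : ¬ Summable (fun n => (1 : ℝ) / k n))
    (B : lp (fun _ : ℕ => ℂ) 2 →L[ℂ] lp (fun _ : ℕ => ℂ) 2)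
    (hB : ∀ (x : lp (fun _ : ℕ => ℂ) 2) (n : ℕ), B x n = x (n + 1))
    (a b : ℝ) (ha : 1 < a) (hab : a < b)
    (y : lp (fun _ : ℕ => ℂ) 2) (hy : y ≠ 0) (hyfin : {n : ℕ | y n ≠ 0}.Finite)
    (s : ℕ) (hs : 0 < s) :
    Dense {x : lp (fun _ : ℕ => ℂ) 2 | ∀ l ∈ Set.Icc a b,
      ∃ n, ‖(((l : ℂ) • B) ^ k n) x - y‖ < 1 / s} := by
  classical
  rw [Metric.dense_iff]
  intro x₀ ε hε
  have hsR : (0:ℝ) < s := by exact_mod_cast hs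
  have ha0 : (0:ℝ) < a := by linarith
  have hb0 : (0:ℝ) < b := by linarith
  have hainv1 : a⁻¹ < 1 := inv_lt_one_of_one_lt₀ ha
  have hainv0 : (0:ℝ) < a⁻¹ := by positivity
  -- support data of y
  set Fy := hyfin.toFinset with hFydef
  have hymem : ∀ t, t ∉ Fy → y t = 0 := by
    intro t ht
    simpa [hFydef, Set.Finite.mem_toFinset, Set.mem_setOf_eq, not_not] using ht
  set ty := Fy.sup id with htydef
  have hty : ∀ t ∈ Fy, t ≤ ty := fun t ht => Finset.le_sup (f := id) ht
  set Y₁ := ∑ t ∈ Fy, ‖y t‖ with hY₁def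
  have hY₁ : 0 ≤ Y₁ := Finset.sum_nonneg fun t _ => norm_nonneg _
  -- the constant c
  set c := Real.log (1 + 1/(2*s*(‖y‖+1))) with hcdef
  have hargpos : (0:ℝ) < 1 + 1/(2*s*(‖y‖+1)) := by positivity
  have hcpos : 0 < c := Real.log_pos (by
    have : (0:ℝ) < 1/(2*s*(‖y‖+1)) := by positivity
    linarith)
  have hexpc : Real.exp c = 1 + 1/(2*s*(‖y‖+1)) := Real.exp_log hargpos
  -- the constant d
  obtain ⟨d₁, hd₁⟩ := exists_pow_lt_of_lt_one
    (show (0:ℝ) < min (1/2) (1/(8*s*(Y₁+1))) by positivity) hainv1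
  set d := max d₁ (ty+1) with hddef
  have hd0 : 0 < d := lt_of_lt_of_le (Nat.succ_pos ty) (le_max_right _ _)
  have hdty : ty < d := lt_of_lt_of_le (Nat.lt_succ_self ty) (le_max_right _ _)
  set r := a⁻¹ ^ d with hrdef
  have hr0 : (0:ℝ) ≤ r := by positivity
  have hrmin : r ≤ min (1/2) (1/(8*s*(Y₁+1))) :=
    le_trans (pow_le_pow_of_le_one hainv0.le hainv1.le (le_max_left _ _)) hd₁.le
  have hrhalf : r ≤ 1/2 := le_trans hrmin (min_le_left _ _)
  have hr1 : r < 1 := lt_of_le_of_lt hrhalf (by norm_num)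
  have hrsum : ∀ N : ℕ, ∑ i ∈ Finset.range N, r^i ≤ 2 := by
    intro N
    have h1 : ∑ i ∈ Finset.range N, r^i ≤ ∑' i : ℕ, r^i :=
      Summable.sum_le_tsum _ (fun i _ => by positivity) (summable_geometric_of_lt_one hr0 hr1)
    rw [tsum_geometric_of_lt_one hr0 hr1] at h1
    have h2 : (1 - r)⁻¹ ≤ 2 := by
      rw [inv_le_iff_one_le_mul₀ (by linarith)]
      linarith
    linarith
  -- finitely supported approximation of x₀
  have hsum := (lp.hasSum_single (by norm_num : (2:ℝ≥0∞) ≠ ⊤) x₀).tendsto_sum_nat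
  rw [Metric.tendsto_atTop] at hsum
  obtain ⟨m₀, hm₀⟩ := hsum (ε/2) (by linarith)
  have hm₀' : ‖(∑ i ∈ Finset.range m₀, lp.single 2 i (x₀ i)) - x₀‖ < ε/2 := by
    have := hm₀ m₀ le_rfl
    rwa [dist_eq_norm] at this
  set x₀' := ∑ i ∈ Finset.range m₀, lp.single 2 i (x₀ i) with hx₀'def
  have hx₀'supp : ∀ n, m₀ ≤ n → (x₀' : ℕ → ℂ) n = 0 := by
    intro n hn
    rw [hx₀'def, lp.coeFn_sum, Finset.sum_apply]
    refine Finset.sum_eq_zero fun i hi => ?_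
    rw [singleApply, if_neg]
    intro h; rw [h] at hn; exact absurd (Finset.mem_range.mp hi) (not_lt.mpr hn)
  -- choice of n₀
  obtain ⟨n₁, hn₁⟩ := exists_pow_lt_of_lt_one
    (show (0:ℝ) < ε/(8*(Y₁+1)) by positivity) hainv1
  set n₀ := max m₀ n₁ with hn₀def
  -- block indices
  set K : ℕ → ℕ := fun j => k (n₀ + j * d) with hKdef
  have hKpos : ∀ j, 0 < K j := fun j => hkpos _
  have hKge : ∀ i j, i ≤ j → K i + (j - i) * d ≤ K j := by
    intro i j hij
    have h1 := kaddAux k hk (n₀ + i * d) ((j - i) * d)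
    have h2 : n₀ + i * d + (j - i) * d = n₀ + j * d := by
      have : i * d + (j - i) * d = j * d := by
        rw [← Nat.add_mul]; congr 1; omega
      omega
    rw [h2] at h1
    exact h1
  have hKn : ∀ j, n₀ + j * d ≤ K j := fun j => hk.le_apply
  -- the grid in log scale
  set t : ℕ → ℝ := fun j => Real.log a + c * ∑ i ∈ Finset.range j, (1:ℝ)/(K i) with htdef
  have htmono : Monotone t := by
    intro i j hij
    simp only [htdef]
    have : ∑ i' ∈ Finset.range i, (1:ℝ)/(K i') ≤ ∑ i' ∈ Finset.range j, (1:ℝ)/(K i') := by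
      refine Finset.sum_le_sum_of_subset_of_nonneg (Finset.range_subset_range.mpr hij)
        (fun i' _ _ => by positivity)
    nlinarith [hcpos]
  have ht0 : t 0 = Real.log a := by simp [htdef]
  have htloga : ∀ j, Real.log a ≤ t j := fun j => ht0 ▸ htmono (Nat.zero_le j)
  obtain ⟨J, hJ⟩ := divAux k hk.monotone hkpos hdiv n₀ d hd0 ((Real.log b - Real.log a)/c)
  have hlogab : Real.log a < Real.log b := Real.log_lt_log ha0 hab
  have hJ1 : 1 ≤ J := by
    by_contra h
    push_neg at h
    interval_cases J
    · simp at hJ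
      have : (0:ℝ) < (Real.log b - Real.log a)/c := div_pos (by linarith) hcpos
      linarith
  have htJ : Real.log b ≤ t J := by
    have : (Real.log b - Real.log a)/c < ∑ i ∈ Finset.range J, (1:ℝ)/(K i) := hJ
    simp only [htdef]
    rw [div_lt_iff₀ hcpos, mul_comm] at this
    linarith
  set lam : ℕ → ℝ := fun j => Real.exp (t j) with hlamdef
  have hlampos : ∀ j, 0 < lam j := fun j => Real.exp_pos _
  have hlama : ∀ j, a ≤ lam j := by
    intro j
    have := Real.exp_le_exp.mpr (htloga j)
    rwa [Real.exp_log ha0] at this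
  -- the perturbation
  set Z : ℕ → lp (fun _ : ℕ => ℂ) 2 :=
    fun i => ∑ t' ∈ Fy, lp.single 2 (t' + K i) (y t') with hZdef
  have hZnorm : ∀ i, ‖Z i‖ ≤ Y₁ := by
    intro i
    refine le_trans (norm_sum_le _ _) ?_
    rw [hY₁def]
    refine Finset.sum_le_sum fun t' _ => ?_
    exact (lp.norm_single (E := fun _ : ℕ => ℂ) (p := 2) (by norm_num) (t' + K i) (y t')).le
  set x := x₀' + ∑ i ∈ Finset.range J, (((lam i : ℂ)) ^ (K i))⁻¹ • Z i with hxdef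
  refine ⟨x, ?_, ?_⟩
  · -- in the ball
    rw [Metric.mem_ball, dist_eq_norm]
    have hW : ‖∑ i ∈ Finset.range J, (((lam i : ℂ)) ^ (K i))⁻¹ • Z i‖
        ≤ (a⁻¹)^n₀ * 2 * Y₁ := by
      refine le_trans (norm_sum_le _ _) ?_
      have hterm : ∀ i ∈ Finset.range J,
          ‖(((lam i : ℂ)) ^ (K i))⁻¹ • Z i‖ ≤ ((a⁻¹)^n₀ * r^i) * Y₁ := by
        intro i _
        rw [norm_smul]
        have h1 : ‖(((lam i : ℂ)) ^ (K i))⁻¹‖ = (lam i ^ K i)⁻¹ := by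
          rw [norm_inv, norm_pow, Complex.norm_real, Real.norm_eq_abs, abs_of_nonneg (hlampos i).le]
        rw [h1]
        have h2 : (lam i ^ K i)⁻¹ ≤ (a⁻¹)^n₀ * r^i := by
          have e1 : (lam i ^ K i)⁻¹ ≤ (a ^ K i)⁻¹ := by
            apply inv_anti₀ (by positivity)
            exact pow_le_pow_left₀ ha0.le (hlama i) _
          have e2 : ((a:ℝ) ^ K i)⁻¹ = (a⁻¹)^(K i) := by rw [inv_pow]
          have e3 : ((a:ℝ)⁻¹)^(K i) ≤ (a⁻¹)^(n₀ + i * d) :=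
            pow_le_pow_of_le_one hainv0.le hainv1.le (hKn i)
          have e4 : ((a:ℝ)⁻¹)^(n₀ + i * d) = (a⁻¹)^n₀ * r^i := by
            rw [pow_add, hrdef, ← pow_mul, mul_comm i d]
          calc (lam i ^ K i)⁻¹ ≤ ((a:ℝ) ^ K i)⁻¹ := e1
          _ = (a⁻¹)^(K i) := e2
          _ ≤ (a⁻¹)^(n₀ + i*d) := e3
          _ = (a⁻¹)^n₀ * r^i := e4
        exact mul_le_mul h2 (hZnorm i) (norm_nonneg _) (by positivity)
      refine le_trans (Finset.sum_le_sum hterm) ?_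
      rw [← Finset.sum_mul, ← Finset.mul_sum]
      have h3 := hrsum J
      have h4 : (0:ℝ) ≤ (a⁻¹)^n₀ := by positivity
      have h5 := mul_le_mul_of_nonneg_right (mul_le_mul_of_nonneg_left h3 h4) hY₁
      linarith [h5]
    have hWsmall : (a⁻¹:ℝ)^n₀ * 2 * Y₁ < ε/2 := by
      have h5 : (a⁻¹:ℝ)^n₀ ≤ (a⁻¹)^n₁ :=
        pow_le_pow_of_le_one hainv0.le hainv1.le (le_max_right m₀ n₁)
      have h6 : ((a:ℝ)⁻¹)^n₁ < ε/(8*(Y₁+1)) := hn₁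
      have h7 : (0:ℝ) < Y₁ + 1 := by linarith
      have h8 : (a⁻¹:ℝ)^n₀ * 2 * Y₁ ≤ (a⁻¹)^n₁ * 2 * (Y₁+1) := by
        have := pow_nonneg hainv0.le n₁
        nlinarith [pow_nonneg hainv0.le n₀]
      have h9 : (a⁻¹:ℝ)^n₁ * 2 * (Y₁+1) < (ε/(8*(Y₁+1))) * 2 * (Y₁+1) := by
        nlinarith
      have h10 : (ε/(8*(Y₁+1))) * 2 * (Y₁+1) = ε/4 := by field_simp; ring
      linarith
    have hxsplit : x - x₀ = (x₀' - x₀)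
        + ∑ i ∈ Finset.range J, (((lam i : ℂ)) ^ (K i))⁻¹ • Z i := by
      rw [hxdef]; abel
    calc ‖x - x₀‖ ≤ ‖x₀' - x₀‖
          + ‖∑ i ∈ Finset.range J, (((lam i : ℂ)) ^ (K i))⁻¹ • Z i‖ := by
          rw [hxsplit]; exact norm_add_le _ _
    _ < ε/2 + ε/2 := by
        have := lt_of_le_of_lt hW hWsmall
        linarith [hm₀']
    _ = ε := by ring
  · -- the approximation property
    intro l hl
    obtain ⟨hla, hlb⟩ := hl
    have hl0 : (0:ℝ) < l := by linarith
    set u := Real.log l with hudef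
    have hua : Real.log a ≤ u := Real.log_le_log ha0 hla
    have hub : u ≤ Real.log b := Real.log_le_log hl0 hlb
    set P : ℕ → Prop := fun i => t i ≤ u with hPdef
    set j := Nat.findGreatest P (J-1) with hjdef
    have hjle : j ≤ J - 1 := Nat.findGreatest_le _
    have hjJ : j + 1 ≤ J := by omega
    have hjJ' : j < J := by omega
    have hP0 : P 0 := by
      show t 0 ≤ u
      rw [ht0]; exact hua
    have htj : t j ≤ u := Nat.findGreatest_spec (P := P) (Nat.zero_le _) hP0
    have htj1 : u ≤ t (j+1) := by
      by_cases hcase : j + 1 ≤ J - 1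
      · have hng := Nat.findGreatest_is_greatest (Nat.lt_succ_self j) hcase
        exact le_of_not_ge hng
      · have hjeq : j + 1 = J := by omega
        rw [hjeq]; exact le_trans hub htJ
    refine ⟨n₀ + j * d, ?_⟩
    show ‖(((l:ℂ) • B) ^ (K j)) x - y‖ < 1 / s
    -- images of pieces
    have hx₀'img : (((l:ℂ) • B) ^ (K j)) x₀' = 0 := by
      rw [hx₀'def, map_sum]
      refine Finset.sum_eq_zero fun i hi => ?_
      apply shiftSingleLow B hB
      have h1 := hKn j
      have h2 : m₀ ≤ n₀ := le_max_left _ _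
      have h3 := Finset.mem_range.mp hi
      omega
    have hZlow : ∀ i, i < j → (((l:ℂ) • B) ^ (K j)) (Z i) = 0 := by
      intro i hij
      rw [hZdef]
      simp only
      rw [map_sum]
      refine Finset.sum_eq_zero fun t' ht' => ?_
      apply shiftSingleLow B hB
      have h1 := hKge i j hij.le
      have h2 : d ≤ (j - i) * d := Nat.le_mul_of_pos_left d (by omega)
      have h3 := hty t' ht'
      omega
    set W : ℕ → lp (fun _ : ℕ => ℂ) 2 :=
      fun i => ∑ t' ∈ Fy, lp.single 2 (t' + (K i - K j)) (y t') with hWdef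
    have hWnorm : ∀ i, ‖W i‖ ≤ Y₁ := by
      intro i
      refine le_trans (norm_sum_le _ _) ?_
      rw [hY₁def]
      refine Finset.sum_le_sum fun t' _ => ?_
      exact (lp.norm_single (E := fun _ : ℕ => ℂ) (p := 2) (by norm_num) (t' + (K i - K j)) (y t')).le
    have hWj : W j = y := by
      rw [hWdef]
      simp only [Nat.sub_self, Nat.add_zero]
      exact (sumSingleEq y hyfin).symm
    have hZhigh : ∀ i, j ≤ i → (((l:ℂ) • B) ^ (K j)) (Z i)
        = (l:ℂ)^(K j) • W i := by
      intro i hji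
      have hKji : K j ≤ K i := by have := hKge j i hji; omega
      rw [hZdef, hWdef]
      simp only
      rw [map_sum, Finset.smul_sum]
      refine Finset.sum_congr rfl fun t' ht' => ?_
      rw [shiftSingleHigh B hB _ _ _ _ (by omega : K j ≤ t' + K i)]
      congr 2
      omega
    -- the image identity
    have himg : (((l:ℂ) • B) ^ (K j)) x
        = ((((lam j : ℂ))^(K j))⁻¹ * (l:ℂ)^(K j)) • y
          + ∑ i ∈ Finset.Ico (j+1) J, ((((lam i : ℂ))^(K i))⁻¹ * (l:ℂ)^(K j)) • W i := by
      rw [hxdef, map_add, hx₀'img, zero_add, map_sum]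
      have hstep : ∀ i ∈ Finset.range J,
          (((l:ℂ) • B) ^ (K j)) ((((lam i : ℂ))^(K i))⁻¹ • Z i)
          = if j ≤ i then ((((lam i : ℂ))^(K i))⁻¹ * (l:ℂ)^(K j)) • W i else 0 := by
        intro i _
        rw [map_smul]
        by_cases hij : j ≤ i
        · rw [if_pos hij, hZhigh i hij, smul_smul]
        · rw [if_neg hij, hZlow i (by omega), smul_zero]
      rw [Finset.sum_congr rfl hstep, ← Finset.sum_filter]
      have hfilter : Finset.filter (fun i => j ≤ i) (Finset.range J) = Finset.Ico j J := by
        ext i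
        simp only [Finset.mem_filter, Finset.mem_range, Finset.mem_Ico]
        omega
      rw [hfilter, Finset.sum_eq_sum_Ico_succ_bot hjJ', hWj]
    have hdiff : (((l:ℂ) • B) ^ (K j)) x - y
        = (((((lam j : ℂ))^(K j))⁻¹ * (l:ℂ)^(K j) - 1) • y)
          + ∑ i ∈ Finset.Ico (j+1) J, ((((lam i : ℂ))^(K i))⁻¹ * (l:ℂ)^(K j)) • W i := by
      rw [himg, sub_smul, one_smul]
      abel
    -- main term estimate
    have hlexp : l = Real.exp u := (Real.exp_log hl0).symm
    have hlamj_le : lam j ≤ l := by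
      rw [hlamdef, hlexp]
      simp only
      exact Real.exp_le_exp.mpr htj
    set ρ : ℝ := (l / lam j)^(K j) with hρdef
    have hρ1 : 1 ≤ ρ := one_le_pow₀ ((one_le_div (hlampos j)).mpr hlamj_le)
    have hρec : ρ ≤ Real.exp c := by
      have h1 : l / lam j = Real.exp (u - t j) := by
        rw [Real.exp_sub, hlexp, hlamdef]
      have h2 : ρ = Real.exp ((K j) * (u - t j)) := by
        rw [hρdef, h1, ← Real.exp_nat_mul]
      rw [h2]
      apply Real.exp_le_exp.mpr
      have h3 : t (j+1) - t j = c / K j := by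
        simp only [htdef]
        rw [Finset.sum_range_succ]
        have hKne : ((K j : ℝ)) ≠ 0 := by
          have := hKpos j; positivity
        field_simp
        ring
      have h4 : u - t j ≤ c / K j := by rw [← h3]; exact sub_le_sub_right htj1 _
      have h5 : (0:ℝ) < (K j : ℝ) := by exact_mod_cast hKpos j
      calc (K j : ℝ) * (u - t j) ≤ (K j : ℝ) * (c / K j) :=
            mul_le_mul_of_nonneg_left h4 h5.le
      _ = c := by field_simp
    have hμ : (((lam j : ℂ))^(K j))⁻¹ * (l:ℂ)^(K j) = ((ρ : ℝ) : ℂ) := by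
      rw [hρdef]
      push_cast
      rw [div_pow, div_eq_mul_inv, mul_comm]
    have hmain : ‖((((lam j : ℂ))^(K j))⁻¹ * (l:ℂ)^(K j) - 1) • y‖ < 1/(2*s) := by
      rw [norm_smul, hμ]
      have h1 : ((ρ:ℝ):ℂ) - 1 = ((ρ - 1 : ℝ) : ℂ) := by push_cast; ring
      rw [h1, Complex.norm_real, Real.norm_eq_abs, abs_of_nonneg (by linarith)]
      have h2 : ρ - 1 ≤ 1/(2*s*(‖y‖+1)) := by
        have := hρec; rw [hexpc] at this; linarith
      have h4 : (ρ - 1) * ‖y‖ ≤ (1/(2*s*(‖y‖+1))) * ‖y‖ :=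
        mul_le_mul_of_nonneg_right h2 (norm_nonneg y)
      have h5 : (1/(2*(s:ℝ)*(‖y‖+1))) * ‖y‖ < 1/(2*s) := by
        rw [div_mul_eq_mul_div, one_mul, div_lt_div_iff₀ (by positivity) (by positivity)]
        nlinarith [norm_nonneg y]
      linarith
    have hcross : ‖∑ i ∈ Finset.Ico (j+1) J, ((((lam i : ℂ))^(K i))⁻¹ * (l:ℂ)^(K j)) • W i‖
        ≤ Y₁ * (2 * r) := by
      refine le_trans (norm_sum_le _ _) ?_
      have hterm : ∀ i ∈ Finset.Ico (j+1) J,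
          ‖((((lam i : ℂ))^(K i))⁻¹ * (l:ℂ)^(K j)) • W i‖ ≤ r^(i-j) * Y₁ := by
        intro i hi
        obtain ⟨hi1, hi2⟩ := Finset.mem_Ico.mp hi
        rw [norm_smul, norm_mul, norm_inv, norm_pow, norm_pow, Complex.norm_real,
          Real.norm_eq_abs, abs_of_nonneg (hlampos i).le, Complex.norm_real,
          Real.norm_eq_abs, abs_of_nonneg hl0.le]
        have hKji : K j + (i - j) * d ≤ K i := hKge j i (by omega)
        have hlle : l ≤ lam i := by
          rw [hlexp, hlamdef]
          exact Real.exp_le_exp.mpr (le_trans htj1 (htmono (by omega : j+1 ≤ i)))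
        have hlampow : (0:ℝ) < lam i ^ K i := pow_pos (hlampos i) _
        have e1 : (lam i ^ K i)⁻¹ * l ^ (K j) ≤ (lam i ^ K i)⁻¹ * lam i ^ (K j) :=
          mul_le_mul_of_nonneg_left (pow_le_pow_left₀ hl0.le hlle _) (by positivity)
        have e2 : (lam i ^ K i)⁻¹ * lam i ^ (K j) = (lam i ^ (K i - K j))⁻¹ := by
          have hsplit : lam i ^ K i = lam i ^ (K i - K j) * lam i ^ (K j) := by
            rw [← pow_add]; congr 1; omega
          rw [hsplit, mul_inv, mul_assoc, inv_mul_cancel₀ (by positivity), mul_one]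
        have e3 : ((lam i : ℝ) ^ (K i - K j))⁻¹ ≤ (a ^ (K i - K j))⁻¹ := by
          apply inv_anti₀ (by positivity)
          exact pow_le_pow_left₀ ha0.le (hlama i) _
        have e4 : ((a:ℝ) ^ (K i - K j))⁻¹ = (a⁻¹)^(K i - K j) := (inv_pow a _).symm
        have e5 : ((a:ℝ)⁻¹)^(K i - K j) ≤ (a⁻¹)^((i-j)*d) :=
          pow_le_pow_of_le_one hainv0.le hainv1.le (by omega)
        have e6 : ((a:ℝ)⁻¹)^((i-j)*d) = r^(i-j) := by
          rw [hrdef, ← pow_mul, mul_comm]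
        have ekey : (lam i ^ K i)⁻¹ * l ^ (K j) ≤ r^(i-j) := by
          calc (lam i ^ K i)⁻¹ * l ^ (K j) ≤ (lam i ^ K i)⁻¹ * lam i ^ (K j) := e1
          _ = (lam i ^ (K i - K j))⁻¹ := e2
          _ ≤ ((a:ℝ) ^ (K i - K j))⁻¹ := e3
          _ = (a⁻¹)^(K i - K j) := e4
          _ ≤ (a⁻¹)^((i-j)*d) := e5
          _ = r^(i-j) := e6
        exact mul_le_mul ekey (hWnorm i) (norm_nonneg _) (by positivity)
      refine le_trans (Finset.sum_le_sum hterm) ?_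
      rw [← Finset.sum_mul]
      have hsum2 : ∑ i ∈ Finset.Ico (j+1) J, r^(i-j) ≤ 2*r := by
        rw [Finset.sum_Ico_eq_sum_range]
        have hcongr : ∀ m ∈ Finset.range (J - (j+1)), r^(j+1+m-j) = r * r^m := by
          intro m _
          have h : j+1+m-j = m+1 := by omega
          rw [h, pow_succ]; ring
        rw [Finset.sum_congr rfl hcongr, ← Finset.mul_sum]
        have h6 := hrsum (J - (j+1))
        have h7 := mul_le_mul_of_nonneg_left h6 hr0
        linarith
      calc (∑ i ∈ Finset.Ico (j+1) J, r^(i-j)) * Y₁ ≤ (2*r) * Y₁ :=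
            mul_le_mul_of_nonneg_right hsum2 hY₁
      _ = Y₁ * (2*r) := by ring
    have hrY : Y₁ * (2*r) ≤ 1/(4*s) := by
      have h1 : r ≤ 1/(8*s*(Y₁+1)) := le_trans hrmin (min_le_right _ _)
      have hq : (0:ℝ) ≤ 1/(8*(s:ℝ)*(Y₁+1)) := by positivity
      have h2a : (0:ℝ) ≤ 2*r := by linarith
      have h2b : 2*r ≤ 2 * (1/(8*(s:ℝ)*(Y₁+1))) := by linarith
      have h2c : Y₁ ≤ Y₁ + 1 := by linarith
      have h2d : (0:ℝ) ≤ Y₁ + 1 := by linarith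
      have h2 : Y₁ * (2*r) ≤ (Y₁+1) * (2 * (1/(8*(s:ℝ)*(Y₁+1)))) :=
        mul_le_mul h2c h2b h2a h2d
      have h3 : (Y₁+1) * (2 * (1/(8*(s:ℝ)*(Y₁+1)))) = 1/(4*s) := by
        field_simp
        ring
      linarith
    have hfin : (1:ℝ)/(2*s) + 1/(4*s) < 1/s := by
      rw [div_add_div _ _ (by positivity) (by positivity),
        div_lt_div_iff₀ (by positivity) hsR]
      nlinarith [mul_pos hsR hsR]
    calc ‖(((l:ℂ) • B) ^ (K j)) x - y‖
        ≤ ‖((((lam j : ℂ))^(K j))⁻¹ * (l:ℂ)^(K j) - 1) • y‖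
          + ‖∑ i ∈ Finset.Ico (j+1) J, ((((lam i : ℂ))^(K i))⁻¹ * (l:ℂ)^(K j)) • W i‖ := by
          rw [hdiff]; exact norm_add_le _ _
    _ < 1/(2*s) + 1/(4*s) := by
        have := le_trans hcross hrY
        linarith
    _ < 1/s := hfin
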